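/- For every connected simple graph G of order n with maximum degree Δ, γ_dR(G) ≤ 2n − 2Δ + 1. -/

import Mathlib

/-- A double Roman dominating function on a simple graph `G`:
values in `{0,1,2,3}`, every vertex with value `0` has two neighbors with value `2`
or one neighbor with value `3`, and every vertex with value `1` has a neighbor with
value at least `2`. -/
def IsDRDF {V : Type*} (G : SimpleGraph V) (f : V → ℕ) : Prop :=
  (∀ v, f v ≤ 3) ∧
  (∀ v, f v = 0 →
    (∃ u w, u ≠ w ∧ G.Adj v u ∧ G.Adj v w ∧ f u = 2 ∧ f w = 2) ∨ ∃ u, G.Adj v u ∧ f u = 3) ∧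
  (∀ v, f v = 1 → ∃ u, G.Adj v u ∧ 2 ≤ f u)

/-- The double Roman domination number: the minimum weight of a DRDF. -/
noncomputable def gammaDR {V : Type*} [Fintype V] (G : SimpleGraph V) : ℕ :=
  sInf {w | ∃ f, IsDRDF G f ∧ ∑ v, f v = w}

/-- For every connected graph `G` of order `n` with maximum degree `Δ`,
`γ_dR(G) ≤ 2n - 2Δ + 1`. -/
theorem gammaDR_le_of_maxDegree {V : Type*} [Fintype V] (G : SimpleGraph V)
    (hconn : G.Connected) (Δ : ℕ)
    (hub : ∀ v, {w | G.Adj v w}.ncard ≤ Δ)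
    (hex : ∃ v, {w | G.Adj v w}.ncard = Δ) :
    gammaDR G ≤ 2 * Fintype.card V - 2 * Δ + 1 := by
  classical
  obtain ⟨v, hv⟩ := hex
  set f : V → ℕ := fun u => if u = v then 3 else if G.Adj v u then 0 else 2 with hf
  have hdrdf : IsDRDF G f := by
    refine ⟨?_, ?_, ?_⟩
    · intro u; simp only [hf]; split_ifs <;> omega
    · intro u hu
      right
      refine ⟨v, ?_, ?_⟩
      · by_contra h
        have : u ≠ v := by
          intro h'; subst h'; simp [hf] at hu
        simp only [hf, if_neg this] at hu
        rw [if_neg (fun h' => h (G.adj_symm h'))] at hu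
        omega
      · simp [hf]
    · intro u hu
      exfalso
      simp only [hf] at hu
      split_ifs at hu <;> omega
  -- card of neighborhood as a finset
  have hcardN : (Finset.univ.filter fun w => G.Adj v w).card = Δ := by
    rw [← hv, Set.ncard_eq_toFinset_card']
    congr 1
    ext w
    simp
  have hΔle : Δ + 1 ≤ Fintype.card V := by
    have hsub : (Finset.univ.filter fun w => G.Adj v w) ⊆ Finset.univ.erase v := by
      intro w hw
      simp only [Finset.mem_filter] at hw
      exact Finset.mem_erase.2 ⟨fun h => G.irrefl (h ▸ hw.2), Finset.mem_univ w⟩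
    have h2 := Finset.card_le_card hsub
    rw [hcardN, Finset.card_erase_of_mem (Finset.mem_univ v), Finset.card_univ] at h2
    have h3 : 0 < Fintype.card V := Fintype.card_pos_iff.2 ⟨v⟩
    omega
  have hsum : ∑ u, f u = 2 * Fintype.card V - 2 * Δ + 1 := by
    have key : ∑ u, (f u + 2 * (if G.Adj v u then 1 else 0)) =
        ∑ u, (if u = v then 3 else 2) := by
      apply Finset.sum_congr rfl
      intro u _
      simp only [hf]
      by_cases h1 : u = v
      · simp [h1, G.loopless]
      · simp only [if_neg h1]
        by_cases h2 : G.Adj v u <;> simp [h2]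
    rw [Finset.sum_add_distrib, ← Finset.mul_sum] at key
    have h1 : ∑ u, (if G.Adj v u then (1:ℕ) else 0) =
        (Finset.univ.filter fun w => G.Adj v w).card := by simp
    have h2 : ∑ u, (if u = v then (3:ℕ) else 2) = 2 * Fintype.card V + 1 := by
      have e : ∀ u : V, (if u = v then (3:ℕ) else 2) = 2 + (if u = v then 1 else 0) := by
        intro u; split_ifs <;> rfl
      simp_rw [e]
      rw [Finset.sum_add_distrib, Finset.sum_const, Finset.card_univ,
        Finset.sum_ite_eq' Finset.univ v (fun _ => (1:ℕ))]
      simp [mul_comm]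
    rw [h1, hcardN, h2] at key
    omega
  calc gammaDR G ≤ ∑ u, f u := Nat.sInf_le ⟨f, hdrdf, rfl⟩
    _ = _ := hsum
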